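/- arXiv:1904.13318 — 2 statements merged into one kernel-verified Lean document; each statement's English description precedes it below -/
import Mathlib

section
/- Let U be a nearest-neighbour QCA on a ring of N sites with N even and N ≥ 6. Then for every n, the subalgebra of operators generated by R_{2n+1} ∪ R_{2n+2} is exactly A_{2n+1} ⊗ A_{2n+2}, the algebra of all operators localized on the sites 2n+1 and 2n+2. -/
open scoped Kronecker

namespace QCA

variable {ι : Type} [Fintype ι] [DecidableEq ι]
variable (F : ι → Type) [∀ i, Fintype (F i)] [∀ i, DecidableEq (F i)]

/-- Configurations: the product basis labels of the lattice Hilbert space `⨂ i, ℂ^(F i)`. -/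
abbrev Conf : Type := ∀ i, F i

/-- Operators on the lattice Hilbert space, as matrices in the product basis. -/
abbrev Ops : Type := Matrix (Conf F) (Conf F) ℂ

/-- `A` is localized on the region `R` if it has the form `B ⊗ 1` with respect to the
splitting `R | Rᶜ` of the tensor factors (entrywise characterization). -/
def Localized (A : Ops F) (R : Set ι) : Prop :=
  (∀ x y : Conf F, A x y ≠ 0 → ∀ i ∉ R, x i = y i) ∧
  (∀ x y x' y' : Conf F, (∀ i ∈ R, x i = x' i) → (∀ i ∈ R, y i = y' i) →
      (∀ i ∉ R, x i = y i) → (∀ i ∉ R, x' i = y' i) → A x y = A x' y')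

/-- Heisenberg evolution `A ↦ U* A U`. -/
noncomputable def heis (U A : Ops F) : Ops F := star U * A * U

/-- The support algebra `S(𝒮, R)`: the smallest subalgebra of operators localized on `R`
such that `𝒮` is contained in (the algebra generated by) it together with the full algebra
of operators localized on `Rᶜ`. -/
noncomputable def supportAlgebra (S : Set (Ops F)) (R : Set ι) : Subalgebra ℂ (Ops F) :=
  sInf {C : Subalgebra ℂ (Ops F) |
    (C : Set (Ops F)) ⊆ {A | Localized F A R} ∧
    S ⊆ ↑(Algebra.adjoin ℂ ((C : Set (Ops F)) ∪ {A | Localized F A Rᶜ}))}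

section Ring

variable {M : ℕ} (sector : ZMod M → Finset ι)

/-- `U` is a nearest-neighbour QCA for the ring of `M` (super)cells described by `sector`:
`U` is unitary, and conjugation by `U` maps operators localized on cell `k` to operators
localized on cells `{k-1, k, k+1}`. -/
def IsRingQCA (U : Ops F) : Prop :=
  U ∈ Matrix.unitaryGroup (Conf F) ℂ ∧
  ∀ (k : ZMod M) (A : Ops F), Localized F A ↑(sector k) →
    Localized F (heis F U A) (↑(sector (k - 1)) ∪ ↑(sector k) ∪ ↑(sector (k + 1)))

/-- The even support algebra `R_k = S(u(A_k ⊗ A_{k+1}), A_{k-1} ⊗ A_k)` (`k` an even site). -/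
noncomputable def REven (U : Ops F) (k : ZMod M) : Subalgebra ℂ (Ops F) :=
  supportAlgebra F (heis F U '' {A | Localized F A (↑(sector k) ∪ ↑(sector (k + 1)))})
    (↑(sector (k - 1)) ∪ ↑(sector k))

/-- The odd support algebra `R_{k+1} = S(u(A_k ⊗ A_{k+1}), A_{k+1} ⊗ A_{k+2})` (`k` even). -/
noncomputable def ROdd (U : Ops F) (k : ZMod M) : Subalgebra ℂ (Ops F) :=
  supportAlgebra F (heis F U '' {A | Localized F A (↑(sector k) ∪ ↑(sector (k + 1)))})
    (↑(sector (k + 1)) ∪ ↑(sector (k + 2)))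

/-- The Hilbert space dimension of the (super)cell `k`. -/
def siteDim (k : ZMod M) : ℕ := ∏ i ∈ sector k, Fintype.card (F i)

/-- `r` with `C ≅ M_r(ℂ)`, recovered as the square root of the linear dimension of `C`. -/
noncomputable def rdim (C : Subalgebra ℂ (Ops F)) : ℕ := Nat.sqrt (Module.finrank ℂ C)

/-- The GNVW index `ind[U] = r_{2n} / d_{2n}`, evaluated at the even site `2n = 0`. -/
noncomputable def ringIndex (U : Ops F) : ℚ :=
  (rdim F (REven F sector U 0) : ℚ) / (siteDim F sector 0 : ℚ)

end Ring

/-- The standard ring structure: one site per cell. -/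
def stdSector (N : ℕ) : ZMod N → Finset (ZMod N) := fun n => {n}

/-- The embedding of a one-site operator at site `i` into the lattice algebra. -/
noncomputable def embedAt (i : ι) (B : Matrix (F i) (F i) ℂ) : Ops F :=
  fun x y => (if ∀ j, j ≠ i → x j = y j then 1 else 0) * B (x i) (y i)

/-- Pairing of configurations of two parallel lattices. -/
def confPairEquiv (G : ι → Type) [∀ i, Fintype (G i)] [∀ i, DecidableEq (G i)] :
    (Conf F × Conf G) ≃ Conf (fun i => F i × G i) where
  toFun p := fun i => (p.1 i, p.2 i)
  invFun x := (fun i => (x i).1, fun i => (x i).2)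
  left_inv _ := rfl
  right_inv _ := rfl

/-- The tensor product `A ⊗ B` of operators on two parallel lattices, as an operator on the
lattice whose site `i` carries the qudit `F i × G i`. -/
noncomputable def tensorOps (G : ι → Type) [∀ i, Fintype (G i)] [∀ i, DecidableEq (G i)]
    (A : Ops F) (B : Ops G) : Ops (fun i => F i × G i) :=
  Matrix.reindex (confPairEquiv F G) (confPairEquiv F G) (A ⊗ₖ B)



section Aux

set_option linter.unusedSectionVars false

open scoped Classical Pointwise

variable {ι : Type} [Fintype ι] [DecidableEq ι]
variable {F : ι → Type} [∀ i, Fintype (F i)] [∀ i, DecidableEq (F i)]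

lemma Localized.apply_eq_zero {A : Ops F} {R : Set ι} (h : Localized F A R)
    {x y : Conf F} {i : ι} (hi : i ∉ R) (hxy : x i ≠ y i) : A x y = 0 := by
  by_contra hne
  exact hxy (h.1 x y hne i hi)

lemma localized_mono {A : Ops F} {R₁ R₂ : Set ι} (hR : R₁ ⊆ R₂)
    (h : Localized F A R₁) : Localized F A R₂ := by
  constructor
  · intro x y hne i hi
    exact h.1 x y hne i fun hi1 => hi (hR hi1)
  · intro x y x' y' hx hy hxy hxy'
    by_cases hd : ∀ i ∉ R₁, x i = y i
    · refine h.2 x y x' y' (fun i hi => hx i (hR hi)) (fun i hi => hy i (hR hi)) hd ?_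
      intro i hi
      by_cases h2 : i ∈ R₂
      · rw [← hx i h2, ← hy i h2]; exact hd i hi
      · exact hxy' i h2
    · push_neg at hd
      obtain ⟨i₀, hi₀, hne⟩ := hd
      have h2 : i₀ ∈ R₂ := by
        by_contra hc
        exact hne (hxy i₀ hc)
      have hne' : x' i₀ ≠ y' i₀ := by
        rw [← hx i₀ h2, ← hy i₀ h2]; exact hne
      rw [h.apply_eq_zero hi₀ hne, h.apply_eq_zero hi₀ hne']

lemma localized_univ (A : Ops F) : Localized F A Set.univ := by
  constructor
  · intro x y _ i hi; exact absurd (Set.mem_univ i) hi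
  · intro x y x' y' hx hy _ _
    have h1 : x = x' := funext fun i => hx i (Set.mem_univ i)
    have h2 : y = y' := funext fun i => hy i (Set.mem_univ i)
    rw [h1, h2]

lemma localized_one (R : Set ι) : Localized F (1 : Ops F) R := by
  constructor
  · intro x y hne i _
    have : x = y := by
      by_contra hc
      rw [Matrix.one_apply_ne hc] at hne; exact hne rfl
    rw [this]
  · intro x y x' y' hx hy hxy hxy'
    by_cases hxy0 : x = y
    · have h' : x' = y' := funext fun i => by
        by_cases hi : i ∈ R
        · rw [← hx i hi, ← hy i hi, hxy0]
        · exact hxy' i hi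
      rw [hxy0, h', Matrix.one_apply_eq, Matrix.one_apply_eq]
    · have h' : x' ≠ y' := by
        intro hc
        apply hxy0
        funext i
        by_cases hi : i ∈ R
        · rw [hx i hi, hy i hi, hc]
        · rw [hxy i hi]
      rw [Matrix.one_apply_ne hxy0, Matrix.one_apply_ne h']

lemma localized_zero (R : Set ι) : Localized F (0 : Ops F) R :=
  ⟨fun _ _ h => absurd rfl h, fun _ _ _ _ _ _ _ _ => rfl⟩

lemma Localized.smul {A : Ops F} {R : Set ι} (h : Localized F A R) (c : ℂ) :
    Localized F (c • A) R := by
  constructor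
  · intro x y hne i hi
    refine h.1 x y (fun hc => ?_) i hi
    rw [Matrix.smul_apply, hc, smul_zero] at hne
    exact hne rfl
  · intro x y x' y' hx hy hxy hxy'
    simp only [Matrix.smul_apply]
    rw [h.2 x y x' y' hx hy hxy hxy']

lemma Localized.add {A B : Ops F} {R : Set ι} (hA : Localized F A R) (hB : Localized F B R) :
    Localized F (A + B) R := by
  constructor
  · intro x y hne i hi
    by_cases hA0 : A x y = 0
    · refine hB.1 x y (fun hc => ?_) i hi
      rw [Matrix.add_apply, hA0, hc, add_zero] at hne
      exact hne rfl
    · exact hA.1 x y hA0 i hi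
  · intro x y x' y' hx hy hxy hxy'
    simp only [Matrix.add_apply, hA.2 x y x' y' hx hy hxy hxy',
      hB.2 x y x' y' hx hy hxy hxy']

lemma Localized.mul {A B : Ops F} {R : Set ι} (hA : Localized F A R) (hB : Localized F B R) :
    Localized F (A * B) R := by
  constructor
  · intro x y hne i hi
    rw [Matrix.mul_apply] at hne
    obtain ⟨t, _, ht⟩ := Finset.exists_ne_zero_of_sum_ne_zero hne
    have h1 : A x t ≠ 0 := fun hc => ht (by rw [hc, zero_mul])
    have h2 : B t y ≠ 0 := fun hc => ht (by rw [hc, mul_zero])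
    rw [hA.1 x t h1 i hi, hB.1 t y h2 i hi]
  · intro x y x' y' hx hy hxy hxy'
    rw [Matrix.mul_apply, Matrix.mul_apply]
    set es : ∀ i, F i ≃ F i := fun i =>
      if i ∈ R then Equiv.refl (F i) else Equiv.swap (x i) (x' i) with hes
    have hesR : ∀ i ∈ R, ∀ a, es i a = a := by intro i hi a; simp [hes, hi]
    have hesN : ∀ i, i ∉ R → ∀ a, es i a = Equiv.swap (x i) (x' i) a := by
      intro i hi a; simp [hes, hi]
    refine Fintype.sum_equiv (Equiv.piCongrRight es)
      (fun t => A x t * B t y) (fun t => A x' t * B t y') ?_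
    intro t
    have het : ∀ i, (Equiv.piCongrRight es) t i = es i (t i) := fun i => rfl
    by_cases ht : ∀ i ∉ R, t i = x i
    · have h1 : A x t = A x' (Equiv.piCongrRight es t) := by
        refine hA.2 x t x' _ hx (fun i hi => by rw [het, hesR i hi])
          (fun i hi => (ht i hi).symm) ?_
        intro i hi
        rw [het, hesN i hi, ht i hi, Equiv.swap_apply_left]
      have h2 : B t y = B (Equiv.piCongrRight es t) y' := by
        refine hB.2 t y _ y' (fun i hi => by rw [het, hesR i hi]) hy ?_ ?_
        · intro i hi; rw [ht i hi, hxy i hi]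
        · intro i hi; rw [het, hesN i hi, ht i hi, Equiv.swap_apply_left, hxy' i hi]
      show A x t * B t y = A x' (Equiv.piCongrRight es t) * B (Equiv.piCongrRight es t) y'
      rw [← h1, ← h2]
    · push_neg at ht
      obtain ⟨i₀, hi₀, hne⟩ := ht
      have hB0 : B t y = 0 := hB.apply_eq_zero hi₀ (hxy i₀ hi₀ ▸ hne)
      have hB0' : B (Equiv.piCongrRight es t) y' = 0 := by
        refine hB.apply_eq_zero hi₀ ?_
        rw [het, hesN i₀ hi₀, ← hxy' i₀ hi₀]
        intro hc
        have := (Equiv.swap (x i₀) (x' i₀)).injective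
          (hc.trans (Equiv.swap_apply_left (x i₀) (x' i₀)).symm)
        exact hne this
      show A x t * B t y = A x' (Equiv.piCongrRight es t) * B (Equiv.piCongrRight es t) y'
      rw [hB0, hB0', mul_zero, mul_zero]


noncomputable def mixr (R : Set ι) (x z : Conf F) : Conf F :=
  fun i => if i ∈ R then x i else z i

lemma mixr_mem {R : Set ι} {x z : Conf F} {i : ι} (hi : i ∈ R) : mixr R x z i = x i :=
  if_pos hi

lemma mixr_not_mem {R : Set ι} {x z : Conf F} {i : ι} (hi : i ∉ R) : mixr R x z i = z i :=
  if_neg hi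

lemma localized_mul_comm {A B : Ops F} {R S : Set ι} (hA : Localized F A R)
    (hB : Localized F B S) (hRS : ∀ i, i ∈ R → i ∉ S) : A * B = B * A := by
  ext x y
  rw [Matrix.mul_apply, Matrix.mul_apply]
  have hL : (∑ t, A x t * B t y) = A x (mixr R y x) * B (mixr R y x) y := by
    refine Finset.sum_eq_single (mixr R y x) ?_ (fun h => absurd (Finset.mem_univ _) h)
    intro t _ htne
    have hex : ∃ i, t i ≠ mixr R y x i := by
      by_contra hc; push_neg at hc; exact htne (funext hc)
    obtain ⟨i, hi⟩ := hex
    by_cases hiR : i ∈ R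
    · rw [mixr_mem hiR] at hi
      rw [hB.apply_eq_zero (hRS i hiR) hi, mul_zero]
    · rw [mixr_not_mem hiR] at hi
      rw [hA.apply_eq_zero hiR (Ne.symm hi), zero_mul]
  have hR : (∑ t, B x t * A t y) = B x (mixr S y x) * A (mixr S y x) y := by
    refine Finset.sum_eq_single (mixr S y x) ?_ (fun h => absurd (Finset.mem_univ _) h)
    intro t _ htne
    have hex : ∃ i, t i ≠ mixr S y x i := by
      by_contra hc; push_neg at hc; exact htne (funext hc)
    obtain ⟨i, hi⟩ := hex
    by_cases hiS : i ∈ S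
    · rw [mixr_mem hiS] at hi
      have hiR : i ∉ R := fun h => (hRS i h) hiS
      rw [hA.apply_eq_zero hiR hi, mul_zero]
    · rw [mixr_not_mem hiS] at hi
      rw [hB.apply_eq_zero hiS (Ne.symm hi), zero_mul]
  rw [hL, hR]
  by_cases hd : ∀ i, i ∉ R → i ∉ S → x i = y i
  · have e1 : A x (mixr R y x) = A (mixr S y x) y := by
      refine hA.2 _ _ _ _ ?_ ?_ ?_ ?_
      · intro i hi; rw [mixr_not_mem (hRS i hi)]
      · intro i hi; rw [mixr_mem hi]
      · intro i hi; rw [mixr_not_mem hi]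
      · intro i hi
        by_cases hiS : i ∈ S
        · rw [mixr_mem hiS]
        · rw [mixr_not_mem hiS]; exact hd i hi hiS
    have e2 : B (mixr R y x) y = B x (mixr S y x) := by
      refine hB.2 _ _ _ _ ?_ ?_ ?_ ?_
      · intro i hi; rw [mixr_not_mem (fun h => (hRS i h) hi)]
      · intro i hi; rw [mixr_mem hi]
      · intro i hi
        by_cases hiR : i ∈ R
        · rw [mixr_mem hiR]
        · rw [mixr_not_mem hiR]; exact hd i hiR hi
      · intro i hi; rw [mixr_not_mem hi]
    rw [e1, e2]; ring
  · push_neg at hd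
    obtain ⟨i₀, hiR, hiS, hne⟩ := hd
    have z1 : B (mixr R y x) y = 0 := by
      refine hB.apply_eq_zero hiS ?_
      rw [mixr_not_mem hiR]; exact hne
    have z2 : A (mixr S y x) y = 0 := by
      refine hA.apply_eq_zero hiR ?_
      rw [mixr_not_mem hiS]; exact hne
    rw [z1, z2, mul_zero, mul_zero]

noncomputable def unitOn (B : Set ι) (z w : Conf F) : Ops F :=
  fun x y => if (∀ i ∉ B, x i = y i) ∧ (∀ i ∈ B, x i = z i) ∧ (∀ i ∈ B, y i = w i)
    then 1 else 0

noncomputable def slice (R : Set ι) (z w : Conf F) (A : Ops F) : Ops F :=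
  fun x y => if ∀ i ∉ R, x i = y i then A (mixr R x z) (mixr R y w) else 0

lemma unitOn_localized (B : Set ι) (z w : Conf F) : Localized F (unitOn B z w) B := by
  constructor
  · intro x y hne i hi
    by_cases hc : (∀ i ∉ B, x i = y i) ∧ (∀ i ∈ B, x i = z i) ∧ (∀ i ∈ B, y i = w i)
    · exact hc.1 i hi
    · simp only [unitOn] at hne
      rw [if_neg hc] at hne
      exact (hne rfl).elim
  · intro x y x' y' hx hy hxy hxy'
    simp only [unitOn]
    have hiff : ((∀ i ∉ B, x i = y i) ∧ (∀ i ∈ B, x i = z i) ∧ (∀ i ∈ B, y i = w i)) ↔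
        ((∀ i ∉ B, x' i = y' i) ∧ (∀ i ∈ B, x' i = z i) ∧ (∀ i ∈ B, y' i = w i)) := by
      constructor
      · rintro ⟨-, h2, h3⟩
        exact ⟨hxy', fun i hi => (hx i hi).symm.trans (h2 i hi),
          fun i hi => (hy i hi).symm.trans (h3 i hi)⟩
      · rintro ⟨-, h2, h3⟩
        exact ⟨hxy, fun i hi => (hx i hi).trans (h2 i hi),
          fun i hi => (hy i hi).trans (h3 i hi)⟩
    exact if_congr hiff rfl rfl

lemma slice_localized {R U : Set ι} (hU : U ⊆ R) {A : Ops F}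
    (hA : Localized F A (Rᶜ ∪ U)) (z w : Conf F) : Localized F (slice R z w A) U := by
  constructor
  · intro x y hne i hi
    simp only [slice] at hne
    by_cases hc : ∀ i ∉ R, x i = y i
    · rw [if_pos hc] at hne
      by_cases hiR : i ∈ R
      · have h := hA.1 _ _ hne i (by simp [hiR, hi])
        rwa [mixr_mem hiR, mixr_mem hiR] at h
      · exact hc i hiR
    · rw [if_neg hc] at hne; exact (hne rfl).elim
  · intro x y x' y' hx hy hxy hxy'
    simp only [slice]
    have hc1 : ∀ i ∉ R, x i = y i := fun i hi => hxy i (fun hu => hi (hU hu))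
    have hc2 : ∀ i ∉ R, x' i = y' i := fun i hi => hxy' i (fun hu => hi (hU hu))
    rw [if_pos hc1, if_pos hc2]
    refine hA.2 _ _ _ _ ?_ ?_ ?_ ?_
    · intro i hi
      rcases hi with hi | hi
      · rw [mixr_not_mem hi, mixr_not_mem hi]
      · rw [mixr_mem (hU hi), mixr_mem (hU hi)]; exact hx i hi
    · intro i hi
      rcases hi with hi | hi
      · rw [mixr_not_mem hi, mixr_not_mem hi]
      · rw [mixr_mem (hU hi), mixr_mem (hU hi)]; exact hy i hi
    · intro i hi
      have hiR : i ∈ R := by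
        by_contra h; exact hi (Or.inl h)
      have hiU : i ∉ U := fun h => hi (Or.inr h)
      rw [mixr_mem hiR, mixr_mem hiR]; exact hxy i hiU
    · intro i hi
      have hiR : i ∈ R := by
        by_contra h; exact hi (Or.inl h)
      have hiU : i ∉ U := fun h => hi (Or.inr h)
      rw [mixr_mem hiR, mixr_mem hiR]; exact hxy' i hiU

lemma slice_localized_full (R : Set ι) (z w : Conf F) (A : Ops F) :
    Localized F (slice R z w A) R :=
  slice_localized subset_rfl (by rw [Set.compl_union_self]; exact localized_univ A) z w

lemma slice_add (R : Set ι) (z w : Conf F) (A B : Ops F) :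
    slice R z w (A + B) = slice R z w A + slice R z w B := by
  funext x y
  simp only [slice, Matrix.add_apply]
  split <;> simp

lemma slice_smul (R : Set ι) (z w : Conf F) (c : ℂ) (A : Ops F) :
    slice R z w (c • A) = c • slice R z w A := by
  funext x y
  simp only [slice, Matrix.smul_apply]
  split <;> simp

lemma slice_zero (R : Set ι) (z w : Conf F) : slice R z w (0 : Ops F) = 0 := by
  funext x y
  simp only [slice]
  split <;> rfl

noncomputable def nsec (R : Set ι) : ℕ := Fintype.card (∀ i : R, F i)

lemma nsec_pos (R : Set ι) [∀ i, Nonempty (F i)] : 0 < nsec (F := F) R := by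
  haveI : Nonempty (∀ i : R, F i) := ⟨fun i => Classical.arbitrary _⟩
  exact Fintype.card_pos

lemma sum_fix (R : Set ι) (x : Conf F) :
    (∑ z : Conf F, if ∀ i ∉ R, x i = z i then (1 : ℂ) else 0) = (nsec (F := F) R : ℂ) := by
  rw [Finset.sum_boole]
  norm_cast
  rw [nsec, ← Fintype.card_subtype]
  refine Fintype.card_congr ?_
  refine ⟨fun z i => z.1 i.1, fun g => ⟨fun i => if h : i ∈ R then g ⟨i, h⟩ else x i,
    fun i hi => by
      show x i = if h : i ∈ R then g ⟨i, h⟩ else x i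
      rw [dif_neg hi]⟩, ?_, ?_⟩
  · rintro ⟨z, hz⟩
    refine Subtype.ext (funext fun i => ?_)
    by_cases h : i ∈ R
    · simp [h]
    · simp [h, hz i h]
  · intro g
    funext i
    simp [i.2]

lemma sum_fix' (R : Set ι) (y : Conf F) :
    (∑ w : Conf F, if ∀ i ∉ R, w i = y i then (1 : ℂ) else 0) = (nsec (F := F) R : ℂ) := by
  rw [← sum_fix R y]
  refine Finset.sum_congr rfl fun w _ => ?_
  have : (∀ i ∉ R, w i = y i) ↔ (∀ i ∉ R, y i = w i) :=
    ⟨fun h i hi => (h i hi).symm, fun h i hi => (h i hi).symm⟩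
  exact if_congr this rfl rfl

lemma unitOn_mul_slice (R : Set ι) (z w : Conf F) (A : Ops F) (x y : Conf F) :
    (unitOn Rᶜ z w * slice R z w A) x y =
      if (∀ i ∉ R, x i = z i) ∧ (∀ i ∉ R, w i = y i) then A x y else 0 := by
  rw [Matrix.mul_apply]
  have h1 : (∑ t, unitOn Rᶜ z w x t * slice R z w A t y)
      = unitOn Rᶜ z w x (mixr R x w) * slice R z w A (mixr R x w) y := by
    refine Finset.sum_eq_single _ ?_ (fun h => absurd (Finset.mem_univ _) h)
    intro t _ htne
    have hex : ∃ i, t i ≠ mixr R x w i := by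
      by_contra hc; push_neg at hc; exact htne (funext hc)
    obtain ⟨i, hi⟩ := hex
    have h0 : unitOn Rᶜ z w x t = 0 := by
      simp only [unitOn]
      rw [if_neg]
      rintro ⟨hc1, -, hc3⟩
      by_cases hiR : i ∈ R
      · rw [mixr_mem hiR] at hi
        exact hi (hc1 i (by simp [hiR])).symm
      · rw [mixr_not_mem hiR] at hi
        exact hi (hc3 i (by simp [hiR]))
    rw [h0, zero_mul]
  rw [h1]
  by_cases hP : ∀ i ∉ R, x i = z i
  · by_cases hQ : ∀ i ∉ R, w i = y i
    · rw [if_pos ⟨hP, hQ⟩]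
      have hu : unitOn Rᶜ z w x (mixr R x w) = 1 := by
        simp only [unitOn]
        rw [if_pos]
        refine ⟨fun i hi => ?_, fun i hi => hP i (by simpa using hi), fun i hi => ?_⟩
        · rw [mixr_mem (by simpa using hi)]
        · rw [mixr_not_mem (by simpa using hi)]
      have hs : slice R z w A (mixr R x w) y = A x y := by
        simp only [slice]
        rw [if_pos (fun i hi => by rw [mixr_not_mem hi]; exact hQ i hi)]
        congr 1
        · funext i
          by_cases hiR : i ∈ R
          · rw [mixr_mem hiR, mixr_mem hiR]
          · rw [mixr_not_mem hiR]; exact (hP i hiR).symm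
        · funext i
          by_cases hiR : i ∈ R
          · rw [mixr_mem hiR]
          · rw [mixr_not_mem hiR]; exact hQ i hiR
      rw [hu, hs, one_mul]
    · rw [if_neg (by rintro ⟨-, h⟩; exact hQ h)]
      have hs : slice R z w A (mixr R x w) y = 0 := by
        simp only [slice]
        rw [if_neg]
        intro hc
        refine hQ (fun i hi => ?_)
        have := hc i hi
        rwa [mixr_not_mem hi] at this
      rw [hs, mul_zero]
  · rw [if_neg (by rintro ⟨h, -⟩; exact hP h)]
    have hu : unitOn Rᶜ z w x (mixr R x w) = 0 := by
      simp only [unitOn]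
      rw [if_neg]
      rintro ⟨-, h2, -⟩
      exact hP (fun i hi => h2 i (by simpa using hi))
    rw [hu, zero_mul]

lemma res_identity (R : Set ι) (A : Ops F) :
    (∑ z : Conf F, ∑ w : Conf F, unitOn Rᶜ z w * slice R z w A)
      = ((nsec (F := F) R : ℂ) * (nsec (F := F) R : ℂ)) • A := by
  ext x y
  simp only [Matrix.sum_apply, unitOn_mul_slice, Matrix.smul_apply, smul_eq_mul]
  have step : ∀ z : Conf F,
      (∑ w : Conf F, if (∀ i ∉ R, x i = z i) ∧ (∀ i ∉ R, w i = y i) then A x y else 0)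
        = (if ∀ i ∉ R, x i = z i then (1:ℂ) else 0) * ((nsec (F := F) R : ℂ) * A x y) := by
    intro z
    by_cases hP : ∀ i ∉ R, x i = z i
    · rw [if_pos hP, one_mul]
      rw [← sum_fix' R y, Finset.sum_mul]
      refine Finset.sum_congr rfl fun w _ => ?_
      by_cases hQ : ∀ i ∉ R, w i = y i
      · rw [if_pos ⟨hP, hQ⟩, if_pos hQ, one_mul]
      · rw [if_neg (by rintro ⟨-, h⟩; exact hQ h), if_neg hQ, zero_mul]
    · rw [if_neg hP, zero_mul]
      refine Finset.sum_eq_zero fun w _ => ?_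
      rw [if_neg (by rintro ⟨h, -⟩; exact hP h)]
  calc (∑ z : Conf F, ∑ w : Conf F,
        if (∀ i ∉ R, x i = z i) ∧ (∀ i ∉ R, w i = y i) then A x y else 0)
      = ∑ z : Conf F, (if ∀ i ∉ R, x i = z i then (1:ℂ) else 0)
          * ((nsec (F := F) R : ℂ) * A x y) := Finset.sum_congr rfl fun z _ => step z
    _ = (nsec (F := F) R : ℂ) * ((nsec (F := F) R : ℂ) * A x y) := by
        rw [← Finset.sum_mul, sum_fix R x]
    _ = (nsec (F := F) R : ℂ) * (nsec (F := F) R : ℂ) * A x y := by ring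

lemma slice_mul {R : Set ι} {c m : Ops F} (hc : Localized F c R) (hm : Localized F m Rᶜ)
    (z w : Conf F) : slice R z w (c * m) = (m z (mixr R z w)) • c := by
  funext x y
  simp only [slice, Matrix.smul_apply, smul_eq_mul]
  by_cases hcond : ∀ i ∉ R, x i = y i
  · rw [if_pos hcond, Matrix.mul_apply]
    have h1 : (∑ t, c (mixr R x z) t * m t (mixr R y w))
        = c (mixr R x z) (mixr R y z) * m (mixr R y z) (mixr R y w) := by
      refine Finset.sum_eq_single _ ?_ (fun h => absurd (Finset.mem_univ _) h)
      intro t _ htne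
      have hex : ∃ i, t i ≠ mixr R y z i := by
        by_contra hcc; push_neg at hcc; exact htne (funext hcc)
      obtain ⟨i, hi⟩ := hex
      by_cases hiR : i ∈ R
      · rw [mixr_mem hiR] at hi
        have : m t (mixr R y w) = 0 := by
          have hnotc : i ∉ Rᶜ := by simp [hiR]
          refine hm.apply_eq_zero hnotc ?_
          rw [mixr_mem hiR]; exact hi
        rw [this, mul_zero]
      · rw [mixr_not_mem hiR] at hi
        have : c (mixr R x z) t = 0 := by
          refine hc.apply_eq_zero hiR ?_
          rw [mixr_not_mem hiR]; exact Ne.symm hi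
        rw [this, zero_mul]
    rw [h1]
    have e1 : c (mixr R x z) (mixr R y z) = c x y := by
      refine hc.2 _ _ _ _ ?_ ?_ ?_ ?_
      · intro i hi; rw [mixr_mem hi]
      · intro i hi; rw [mixr_mem hi]
      · intro i hi; rw [mixr_not_mem hi, mixr_not_mem hi]
      · intro i hi; exact hcond i hi
    have e2 : m (mixr R y z) (mixr R y w) = m z (mixr R z w) := by
      refine hm.2 _ _ _ _ ?_ ?_ ?_ ?_
      · intro i hi
        have hiR : i ∉ R := by simpa using hi
        rw [mixr_not_mem hiR]
      · intro i hi
        have hiR : i ∉ R := by simpa using hi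
        rw [mixr_not_mem hiR, mixr_not_mem hiR]
      · intro i hi
        have hiR : i ∈ R := by simpa using hi
        rw [mixr_mem hiR, mixr_mem hiR]
      · intro i hi
        have hiR : i ∈ R := by simpa using hi
        rw [mixr_mem hiR]
    rw [e1, e2]; ring
  · rw [if_neg hcond]
    push_neg at hcond
    obtain ⟨i₀, hi₀, hne⟩ := hcond
    rw [hc.apply_eq_zero hi₀ hne, mul_zero]

noncomputable def locAlg (R : Set ι) : Subalgebra ℂ (Ops F) where
  carrier := {A : Ops F | Localized F A R}
  mul_mem' := fun ha hb => Localized.mul ha hb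
  one_mem' := localized_one R
  add_mem' := fun ha hb => Localized.add ha hb
  zero_mem' := localized_zero R
  algebraMap_mem' := fun c => by
    show Localized F (algebraMap ℂ (Ops F) c) R
    rw [Algebra.algebraMap_eq_smul_one]
    exact (localized_one R).smul c

lemma mem_locAlg {A : Ops F} {R : Set ι} : A ∈ locAlg (F := F) R ↔ Localized F A R :=
  Iff.rfl

lemma coe_locAlg (R : Set ι) : (locAlg (F := F) R : Set (Ops F)) = {A | Localized F A R} :=
  rfl

lemma mem_span_products {R : Set ι} {C : Subalgebra ℂ (Ops F)}
    (hC : (C : Set (Ops F)) ⊆ {A : Ops F | Localized F A R}) {a : Ops F}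
    (ha : a ∈ Algebra.adjoin ℂ ((C : Set (Ops F)) ∪ {A : Ops F | Localized F A Rᶜ})) :
    a ∈ Submodule.span ℂ {x : Ops F | ∃ c ∈ C, ∃ m, Localized F m Rᶜ ∧ x = c * m} := by
  induction ha using Algebra.adjoin_induction with
  | mem g hg =>
      rcases hg with hg | hg
      · exact Submodule.subset_span ⟨g, hg, 1, localized_one _, (mul_one g).symm⟩
      · exact Submodule.subset_span ⟨1, C.one_mem, g, hg, (one_mul g).symm⟩
  | algebraMap r =>
      have h1 : (algebraMap ℂ (Ops F)) r = r • ((1 : Ops F) * 1) := by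
        rw [mul_one, Algebra.algebraMap_eq_smul_one]
      rw [h1]
      exact Submodule.smul_mem _ _
        (Submodule.subset_span ⟨1, C.one_mem, 1, localized_one _, rfl⟩)
  | add x y hx hy ihx ihy => exact Submodule.add_mem _ ihx ihy
  | mul x y hx hy ihx ihy =>
      set s : Set (Ops F) := {x : Ops F | ∃ c ∈ C, ∃ m, Localized F m Rᶜ ∧ x = c * m}
      have hss : s * s ⊆ s := by
        rintro u ⟨v, hv, t, ht, rfl⟩
        obtain ⟨c, hc, m, hm, rfl⟩ := hv
        obtain ⟨c', hc', m', hm', rfl⟩ := ht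
        have hcm : m * c' = c' * m :=
          localized_mul_comm hm (hC hc') (fun i hi hiR => hi hiR)
        refine ⟨c * c', C.mul_mem hc hc', m * m', Localized.mul hm hm', ?_⟩
        calc c * m * (c' * m') = c * (m * c' * m') := by
              simp only [mul_assoc]
          _ = c * (c' * (m * m')) := by rw [hcm, mul_assoc]
          _ = c * c' * (m * m') := by rw [mul_assoc]
      have hmm := Submodule.mul_mem_mul ihx ihy
      rw [Submodule.span_mul_span] at hmm
      exact Submodule.span_le.mpr (hss.trans Submodule.subset_span) hmm

lemma slice_mem_of_mem_span {R : Set ι} {C : Subalgebra ℂ (Ops F)}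
    (hC : (C : Set (Ops F)) ⊆ {A : Ops F | Localized F A R}) {a : Ops F}
    (ha : a ∈ Submodule.span ℂ {x : Ops F | ∃ c ∈ C, ∃ m, Localized F m Rᶜ ∧ x = c * m})
    (z w : Conf F) : slice R z w a ∈ C := by
  induction ha using Submodule.span_induction with
  | mem x hx =>
      obtain ⟨c, hc, m, hm, rfl⟩ := hx
      rw [slice_mul (hC hc) hm]
      exact C.smul_mem hc _
  | zero => rw [slice_zero]; exact C.zero_mem
  | add x y hx hy ihx ihy => rw [slice_add]; exact C.add_mem ihx ihy
  | smul r x hx ihx => rw [slice_smul]; exact C.smul_mem ihx r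

lemma localized_mem_of_mem_adjoin [∀ i, Nonempty (F i)] {R : Set ι}
    {C : Subalgebra ℂ (Ops F)}
    (hC : (C : Set (Ops F)) ⊆ {A : Ops F | Localized F A R}) {a : Ops F}
    (haR : Localized F a R)
    (ha : a ∈ Algebra.adjoin ℂ ((C : Set (Ops F)) ∪ {A : Ops F | Localized F A Rᶜ})) :
    a ∈ C := by
  have hsp := mem_span_products hC ha
  haveI : Nonempty (Conf F) := ⟨fun i => Classical.arbitrary _⟩
  have hcard : ((Fintype.card (Conf F) : ℂ)) ≠ 0 := Nat.cast_ne_zero.mpr Fintype.card_ne_zero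
  have hsum : ∀ b ∈ Submodule.span ℂ
      {x : Ops F | ∃ c ∈ C, ∃ m, Localized F m Rᶜ ∧ x = c * m},
      (∑ z : Conf F, slice R z z b) ∈ C := by
    intro b hb
    induction hb using Submodule.span_induction with
    | mem x hx =>
        obtain ⟨c, hc, m, hm, rfl⟩ := hx
        exact sum_mem fun z _ => by rw [slice_mul (hC hc) hm]; exact C.smul_mem hc _
    | zero => simp only [slice_zero, Finset.sum_const_zero]; exact C.zero_mem
    | add x y hx hy ihx ihy =>
        simp only [slice_add, Finset.sum_add_distrib]
        exact C.add_mem ihx ihy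
    | smul r x hx ihx =>
        simp only [slice_smul, ← Finset.smul_sum]
        exact C.smul_mem ihx r
  have h1 : ∀ z : Conf F, slice R z z a = a := by
    intro z
    have hsm := slice_mul haR (localized_one (F := F) Rᶜ) z z
    rw [mul_one] at hsm
    rw [hsm]
    have hmix : mixr R z z = z := funext fun i => by simp [mixr]
    rw [hmix, Matrix.one_apply_eq, one_smul]
  have h2 : (∑ z : Conf F, slice R z z a) = (Fintype.card (Conf F) : ℂ) • a := by
    simp only [h1, Finset.sum_const, Finset.card_univ]
    rw [Nat.cast_smul_eq_nsmul]
  have h3 := hsum a hsp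
  rw [h2] at h3
  have h4 : a = (Fintype.card (Conf F) : ℂ)⁻¹ • ((Fintype.card (Conf F) : ℂ) • a) := by
    rw [smul_smul, inv_mul_cancel₀ hcard, one_smul]
  rw [h4]
  exact C.smul_mem h3 _

lemma localized_empty [Nonempty (Conf F)] {A : Ops F} (hA : Localized F A (∅ : Set ι)) :
    A = A (Classical.arbitrary _) (Classical.arbitrary _) • 1 := by
  ext x y
  by_cases hxy : x = y
  · subst hxy
    rw [Matrix.smul_apply, Matrix.one_apply_eq, smul_eq_mul, mul_one]
    exact hA.2 x x _ _ (fun i hi => absurd hi (Set.notMem_empty i))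
      (fun i hi => absurd hi (Set.notMem_empty i)) (fun i _ => rfl) (fun i _ => rfl)
  · have hex : ∃ i, x i ≠ y i := by
      by_contra hc; push_neg at hc; exact hxy (funext hc)
    obtain ⟨i, hi⟩ := hex
    rw [hA.apply_eq_zero (Set.notMem_empty i) hi, Matrix.smul_apply,
      Matrix.one_apply_ne hxy, smul_zero]

lemma generate_of_partition {κ : Type} [DecidableEq κ] [∀ i, Nonempty (F i)]
    (Rg : κ → Set ι) (s : Finset κ)
    (hdisj : ∀ m ∈ s, ∀ m' ∈ s, m ≠ m' → ∀ i, i ∈ Rg m → i ∉ Rg m') :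
    ∀ A : Ops F, Localized F A (⋃ m ∈ s, Rg m) →
      A ∈ Algebra.adjoin ℂ (⋃ m ∈ s, {B : Ops F | Localized F B (Rg m)}) := by
  haveI : Nonempty (Conf F) := ⟨fun i => Classical.arbitrary _⟩
  induction s using Finset.induction_on with
  | empty =>
      intro A hA
      simp only [Finset.notMem_empty, Set.iUnion_of_empty, Set.iUnion_empty] at hA
      rw [localized_empty hA, ← Algebra.algebraMap_eq_smul_one]
      exact Subalgebra.algebraMap_mem _ _
  | insert _ _ hnm ih =>
      rename_i a s'
      intro A hA
      rw [Finset.set_biUnion_insert] at hA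
      set U : Set ι := ⋃ m ∈ s', Rg m with hU
      have hUsub : U ⊆ (Rg a)ᶜ := by
        intro i hi
        simp only [hU, Set.mem_iUnion] at hi
        obtain ⟨m, hm, him⟩ := hi
        exact hdisj m (Finset.mem_insert_of_mem hm) a (Finset.mem_insert_self a s')
          (fun h => hnm (h ▸ hm)) i him
      have hA' : Localized F A (((Rg a)ᶜ)ᶜ ∪ U) := by rwa [compl_compl]
      have key := res_identity (F := F) ((Rg a)ᶜ) A
      rw [compl_compl] at key
      set cst : ℂ := (nsec (F := F) ((Rg a)ᶜ) : ℂ) * (nsec (F := F) ((Rg a)ᶜ) : ℂ) with hcst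
      have hcne : cst ≠ 0 := by
        have := nsec_pos (F := F) ((Rg a)ᶜ)
        exact mul_ne_zero (Nat.cast_ne_zero.mpr this.ne') (Nat.cast_ne_zero.mpr this.ne')
      have hAeq : A = cst⁻¹ • (∑ z : Conf F, ∑ w : Conf F,
          unitOn (Rg a) z w * slice ((Rg a)ᶜ) z w A) := by
        rw [key, smul_smul, inv_mul_cancel₀ hcne, one_smul]
      rw [hAeq]
      refine Subalgebra.smul_mem _ (sum_mem fun z _ => sum_mem fun w _ =>
        mul_mem ?_ ?_) _
      · exact Algebra.subset_adjoin (Set.mem_biUnion (Finset.mem_insert_self a s')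
          (unitOn_localized (Rg a) z w))
      · have hsl := slice_localized hUsub hA' z w
        have hmem := ih (fun m hm m' hm' hne => hdisj m (Finset.mem_insert_of_mem hm)
          m' (Finset.mem_insert_of_mem hm') hne) _ hsl
        refine Algebra.adjoin_mono ?_ hmem
        exact Set.biUnion_subset_biUnion_left (fun m hm => Finset.mem_insert_of_mem hm)

lemma supportAlgebra_eq [∀ i, Nonempty (F i)] (S : Set (Ops F)) (R : Set ι) :
    supportAlgebra F S R
      = Algebra.adjoin ℂ {x : Ops F | ∃ a ∈ S, ∃ z w : Conf F, x = slice R z w a} := by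
  set Cs := Algebra.adjoin ℂ {x : Ops F | ∃ a ∈ S, ∃ z w : Conf F, x = slice R z w a}
    with hCsdef
  have hCsLoc : (Cs : Set (Ops F)) ⊆ {A : Ops F | Localized F A R} := by
    have hle : Cs ≤ locAlg (F := F) R := by
      apply Algebra.adjoin_le
      rintro x ⟨a, ha, z, w, rfl⟩
      exact slice_localized_full R z w a
    exact hle
  have hexp : S ⊆ ↑(Algebra.adjoin ℂ ((Cs : Set (Ops F)) ∪ {A : Ops F | Localized F A Rᶜ})) := by
    intro a ha
    have key := res_identity (F := F) R a
    set cst : ℂ := (nsec (F := F) R : ℂ) * (nsec (F := F) R : ℂ) with hcst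
    have hcne : cst ≠ 0 := by
      have := nsec_pos (F := F) R
      exact mul_ne_zero (Nat.cast_ne_zero.mpr this.ne') (Nat.cast_ne_zero.mpr this.ne')
    have hAeq : a = cst⁻¹ • (∑ z : Conf F, ∑ w : Conf F,
        unitOn Rᶜ z w * slice R z w a) := by
      rw [key, smul_smul, inv_mul_cancel₀ hcne, one_smul]
    rw [SetLike.mem_coe, hAeq]
    refine Subalgebra.smul_mem _ (sum_mem fun z _ => sum_mem fun w _ => mul_mem ?_ ?_) _
    · exact Algebra.subset_adjoin (Or.inr (unitOn_localized Rᶜ z w))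
    · exact Algebra.subset_adjoin (Or.inl (Algebra.subset_adjoin ⟨a, ha, z, w, rfl⟩))
  refine le_antisymm (sInf_le ⟨hCsLoc, hexp⟩) (le_sInf ?_)
  intro C hC
  apply Algebra.adjoin_le
  rintro x ⟨a, ha, z, w, rfl⟩
  exact slice_mem_of_mem_span hC.1 (mem_span_products hC.1 (hC.2 ha)) z w

lemma supportAlgebra_le_locAlg [∀ i, Nonempty (F i)] (S : Set (Ops F)) (R : Set ι) :
    (supportAlgebra F S R : Set (Ops F)) ⊆ {A : Ops F | Localized F A R} := by
  rw [supportAlgebra_eq]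
  have hle : Algebra.adjoin ℂ {x : Ops F | ∃ a ∈ S, ∃ z w : Conf F, x = slice R z w a}
      ≤ locAlg (F := F) R := by
    apply Algebra.adjoin_le
    rintro x ⟨a, ha, z, w, rfl⟩
    exact slice_localized_full R z w a
  exact hle

lemma subset_adjoin_supportAlgebra [∀ i, Nonempty (F i)] (S : Set (Ops F)) (R : Set ι) :
    S ⊆ ↑(Algebra.adjoin ℂ
      ((supportAlgebra F S R : Set (Ops F)) ∪ {A : Ops F | Localized F A Rᶜ})) := by
  intro a ha
  have key := res_identity (F := F) R a
  set cst : ℂ := (nsec (F := F) R : ℂ) * (nsec (F := F) R : ℂ) with hcst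
  have hcne : cst ≠ 0 := by
    have := nsec_pos (F := F) R
    exact mul_ne_zero (Nat.cast_ne_zero.mpr this.ne') (Nat.cast_ne_zero.mpr this.ne')
  have hAeq : a = cst⁻¹ • (∑ z : Conf F, ∑ w : Conf F,
      unitOn Rᶜ z w * slice R z w a) := by
    rw [key, smul_smul, inv_mul_cancel₀ hcne, one_smul]
  rw [SetLike.mem_coe, hAeq]
  refine Subalgebra.smul_mem _ (sum_mem fun z _ => sum_mem fun w _ => mul_mem ?_ ?_) _
  · exact Algebra.subset_adjoin (Or.inr (unitOn_localized Rᶜ z w))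
  · refine Algebra.subset_adjoin (Or.inl ?_)
    rw [supportAlgebra_eq]
    exact Algebra.subset_adjoin ⟨a, ha, z, w, rfl⟩

noncomputable def heisHom (U : Ops F) (hU : U ∈ Matrix.unitaryGroup (Conf F) ℂ) :
    Ops F →ₐ[ℂ] Ops F where
  toFun A := heis F U A
  map_one' := by
    simp only [heis, mul_one]
    exact hU.1
  map_mul' A B := by
    simp only [heis]
    calc star U * (A * B) * U = star U * (A * ((U * star U) * (B * U))) := by
          rw [hU.2, one_mul]
          simp only [mul_assoc]
      _ = star U * A * U * (star U * B * U) := by simp only [mul_assoc]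
  map_zero' := by simp [heis]
  map_add' A B := by
    simp only [heis, mul_add, add_mul]
  commutes' r := by
    simp only [heis, Algebra.algebraMap_eq_smul_one]
    rw [mul_smul_comm, mul_one, smul_mul_assoc, hU.1]

lemma heisHom_apply (U : Ops F) (hU : U ∈ Matrix.unitaryGroup (Conf F) ℂ) (A : Ops F) :
    heisHom U hU A = heis F U A := rfl

end Aux




section RingAux

open scoped Classical

lemma zmod_parity_ne {N : ℕ} [NeZero N] (hN : 2 ∣ N) (a b : ZMod N) :
    2 * a ≠ 2 * b + 1 := by
  intro h
  have h2 := congrArg (ZMod.castHom hN (ZMod 2)) h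
  rw [map_add, map_mul, map_mul, map_one] at h2
  have h3 : (ZMod.castHom hN (ZMod 2)) 2 = 0 := by
    have e : ((2 : ZMod N)) = ((2 : ℕ) : ZMod N) := by norm_cast
    rw [e, map_natCast]
    decide
  rw [h3, zero_mul, zero_mul, zero_add] at h2
  exact absurd h2 (by decide)

lemma pairs_cover (N : ℕ) [NeZero N] (hNe : 2 ∣ N) :
    (⋃ m ∈ Finset.range (N / 2),
      ({((2 * m : ℕ) : ZMod N), ((2 * m : ℕ) : ZMod N) + 1} : Set (ZMod N))) = Set.univ := by
  apply Set.eq_univ_of_forall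
  intro j
  simp only [Set.mem_iUnion, Set.mem_insert_iff, Set.mem_singleton_iff, Finset.mem_range]
  have hv : j.val < N := ZMod.val_lt j
  refine ⟨j.val / 2, by omega, ?_⟩
  rcases Nat.even_or_odd j.val with he | ho
  · left
    obtain ⟨c, hc⟩ := he
    have h2 : 2 * (j.val / 2) = j.val := by omega
    rw [h2, ZMod.natCast_zmod_val]
  · right
    obtain ⟨c, hc⟩ := ho
    have h2 : 2 * (j.val / 2) + 1 = j.val := by omega
    have h3 : ((2 * (j.val / 2) : ℕ) : ZMod N) + 1
        = ((2 * (j.val / 2) + 1 : ℕ) : ZMod N) := by push_cast; ring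
    rw [h3, h2, ZMod.natCast_zmod_val]

lemma heis_two_site {N : ℕ} [NeZero N] {d : ZMod N → ℕ} (hd : ∀ n, 1 ≤ d n)
    {U : Ops (fun n : ZMod N => Fin (d n))}
    (hU : IsRingQCA (fun n : ZMod N => Fin (d n)) (stdSector N) U)
    (hone : (1 : ZMod N) ≠ 0) (j : ZMod N) (A : Ops (fun n : ZMod N => Fin (d n)))
    (hA : Localized (fun n : ZMod N => Fin (d n)) A ({j, j + 1} : Set (ZMod N))) :
    Localized (fun n : ZMod N => Fin (d n)) (heis (fun n : ZMod N => Fin (d n)) U A)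
      ({j - 1, j, j + 1, j + 2} : Set (ZMod N)) := by
  haveI : ∀ i : ZMod N, Nonempty (Fin (d i)) := fun i => ⟨⟨0, hd i⟩⟩
  set T4 : Set (ZMod N) := {j - 1, j, j + 1, j + 2} with hT4
  have hne : j + 1 ≠ j := by
    intro h
    apply hone
    have h' := congrArg (fun t => t - j) h
    simpa using h'
  have hsub1 : ({j + 1} : Set (ZMod N)) ⊆ (({j} : Set (ZMod N)))ᶜ := by
    intro i hi
    simp only [Set.mem_singleton_iff] at hi
    subst hi
    simp only [Set.mem_compl_iff, Set.mem_singleton_iff]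
    exact hne
  have hA' : Localized (fun n : ZMod N => Fin (d n)) A (((({j} : Set (ZMod N)))ᶜ)ᶜ ∪ {j + 1}) := by
    rw [compl_compl]
    have hu : ({j} : Set (ZMod N)) ∪ {j + 1} = {j, j + 1} := by
      rw [Set.singleton_union]
    rwa [hu]
  have key := res_identity (F := (fun n : ZMod N => Fin (d n))) (({j} : Set (ZMod N))ᶜ) A
  rw [compl_compl] at key
  set cst : ℂ := (nsec (F := (fun n : ZMod N => Fin (d n))) (({j} : Set (ZMod N))ᶜ) : ℂ)
      * (nsec (F := (fun n : ZMod N => Fin (d n))) (({j} : Set (ZMod N))ᶜ) : ℂ) with hcst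
  have hcne : cst ≠ 0 := by
    have hp := nsec_pos (F := (fun n : ZMod N => Fin (d n))) (({j} : Set (ZMod N))ᶜ)
    exact mul_ne_zero (Nat.cast_ne_zero.mpr hp.ne') (Nat.cast_ne_zero.mpr hp.ne')
  have hAeq : A = cst⁻¹ • (∑ z : Conf (fun n : ZMod N => Fin (d n)), ∑ w : Conf (fun n : ZMod N => Fin (d n)),
      unitOn ({j} : Set (ZMod N)) z w * slice (({j} : Set (ZMod N))ᶜ) z w A) := by
    rw [key, smul_smul, inv_mul_cancel₀ hcne, one_smul]
  set f := heisHom U hU.1 with hf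
  have hloc : ∀ z w : Conf (fun n : ZMod N => Fin (d n)),
      f (unitOn ({j} : Set (ZMod N)) z w * slice (({j} : Set (ZMod N))ᶜ) z w A)
        ∈ locAlg (F := (fun n : ZMod N => Fin (d n))) T4 := by
    intro z w
    rw [map_mul]
    refine mul_mem ?_ ?_
    · have h1 : Localized (fun n : ZMod N => Fin (d n)) (unitOn ({j} : Set (ZMod N)) z w)
          ↑(stdSector N j) := by
        have hs : ((stdSector N j : Finset (ZMod N)) : Set (ZMod N)) = {j} := by
          simp [stdSector]
        rw [hs]
        exact unitOn_localized _ z w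
      have h2 := hU.2 j _ h1
      refine mem_locAlg.mpr (localized_mono ?_ h2)
      intro i hi
      simp only [stdSector, Finset.coe_singleton, Set.mem_union,
        Set.mem_singleton_iff] at hi
      simp only [hT4, Set.mem_insert_iff, Set.mem_singleton_iff]
      tauto
    · have h1 : Localized (fun n : ZMod N => Fin (d n)) (slice (({j} : Set (ZMod N))ᶜ) z w A)
          ↑(stdSector N (j + 1)) := by
        have hs : ((stdSector N (j + 1) : Finset (ZMod N)) : Set (ZMod N)) = {j + 1} := by
          simp [stdSector]
        rw [hs]
        exact slice_localized hsub1 hA' z w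
      have h2 := hU.2 (j + 1) _ h1
      refine mem_locAlg.mpr (localized_mono ?_ h2)
      intro i hi
      simp only [stdSector, Finset.coe_singleton, Set.mem_union,
        Set.mem_singleton_iff] at hi
      have e1 : j + 1 - 1 = j := by ring
      have e2 : j + 1 + 1 = j + 2 := by ring
      rw [e1, e2] at hi
      simp only [hT4, Set.mem_insert_iff, Set.mem_singleton_iff]
      tauto
  have hmem : f A ∈ locAlg (F := (fun n : ZMod N => Fin (d n))) T4 := by
    rw [hAeq, map_smul, map_sum]
    refine Subalgebra.smul_mem _ (sum_mem fun z _ => ?_) _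
    rw [map_sum]
    exact sum_mem fun w _ => hloc z w
  exact mem_locAlg.mp hmem

end RingAux

/-- For a nearest-neighbour QCA on a ring of `N` sites (`N` even, `N ≥ 6`),
the subalgebra generated by `R_{2n+1} ∪ R_{2n+2}` is exactly the algebra
`A_{2n+1} ⊗ A_{2n+2}` of all operators localized on the sites `2n+1` and `2n+2`. -/
theorem odd_even_support_algebras_generate (N : ℕ) [NeZero N] (hNeven : Even N) (hN : 6 ≤ N)
    (d : ZMod N → ℕ) (hd : ∀ n, 1 ≤ d n) (U : Ops (fun n : ZMod N => Fin (d n)))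
    (hU : IsRingQCA (fun n : ZMod N => Fin (d n)) (stdSector N) U) (n : ZMod N) :
    (↑(Algebra.adjoin ℂ
        ((ROdd (fun n : ZMod N => Fin (d n)) (stdSector N) U (2 * n) : Set (Ops (fun n : ZMod N => Fin (d n)))) ∪
          (REven (fun n : ZMod N => Fin (d n)) (stdSector N) U (2 * n + 2) : Set (Ops (fun n : ZMod N => Fin (d n)))))) : Set (Ops (fun n : ZMod N => Fin (d n))))
      = {A | Localized (fun n : ZMod N => Fin (d n)) A ({2 * n + 1, 2 * n + 2} : Set (ZMod N))}  := by
  haveI : ∀ i : ZMod N, Nonempty (Fin (d i)) := fun i => ⟨⟨0, hd i⟩⟩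
  have hN0 : N ≠ 0 := NeZero.ne N
  have h2N : 2 ∣ N := hNeven.two_dvd
  have hNdiv : N / 2 * 2 = N := Nat.div_mul_cancel h2N
  haveI : Fact (1 < N) := ⟨by omega⟩
  have hone : (1 : ZMod N) ≠ 0 := one_ne_zero
  set R : Set (ZMod N) := {2 * n + 1, 2 * n + 2} with hR
  have hsec : ∀ a : ZMod N, ((stdSector N a : Finset (ZMod N)) : Set (ZMod N)) = {a} :=
    fun a => by simp [stdSector]
  set SO : Set (Ops (fun n : ZMod N => Fin (d n))) :=
    heis (fun n : ZMod N => Fin (d n)) U ''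
      {A | Localized (fun n : ZMod N => Fin (d n)) A ({2 * n, 2 * n + 1} : Set (ZMod N))}
    with hSO
  set SE : Set (Ops (fun n : ZMod N => Fin (d n))) :=
    heis (fun n : ZMod N => Fin (d n)) U ''
      {A | Localized (fun n : ZMod N => Fin (d n)) A ({2 * n + 2, 2 * n + 3} : Set (ZMod N))}
    with hSE
  have hodd : ROdd (fun n : ZMod N => Fin (d n)) (stdSector N) U (2 * n)
      = supportAlgebra (fun n : ZMod N => Fin (d n)) SO R := by
    rw [ROdd, hSO, hR]
    simp only [hsec, Set.singleton_union]
  have heven : REven (fun n : ZMod N => Fin (d n)) (stdSector N) U (2 * n + 2)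
      = supportAlgebra (fun n : ZMod N => Fin (d n)) SE R := by
    rw [REven, hSE, hR]
    have e1 : (2 * n + 2 + 1 : ZMod N) = 2 * n + 3 := by ring
    have e2 : (2 * n + 2 - 1 : ZMod N) = 2 * n + 1 := by ring
    rw [e1, e2]
    simp only [hsec, Set.singleton_union]
  set W := Algebra.adjoin ℂ
      ((ROdd (fun n : ZMod N => Fin (d n)) (stdSector N) U (2 * n) :
          Set (Ops (fun n : ZMod N => Fin (d n)))) ∪
        (REven (fun n : ZMod N => Fin (d n)) (stdSector N) U (2 * n + 2) :
          Set (Ops (fun n : ZMod N => Fin (d n))))) with hW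
  have hWloc : (W : Set (Ops (fun n : ZMod N => Fin (d n))))
      ⊆ {A | Localized (fun n : ZMod N => Fin (d n)) A R} := by
    have hle : W ≤ locAlg (F := fun n : ZMod N => Fin (d n)) R := by
      apply Algebra.adjoin_le
      intro x hx
      rcases hx with hx | hx
      · rw [SetLike.mem_coe, hodd] at hx
        exact supportAlgebra_le_locAlg SO R hx
      · rw [SetLike.mem_coe, heven] at hx
        exact supportAlgebra_le_locAlg SE R hx
    exact hle
  ext A
  simp only [SetLike.mem_coe, Set.mem_setOf_eq]
  constructor
  · intro hA
    exact hWloc hA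
  · intro hA
    set f := heisHom U hU.1 with hf
    have hfA : f (U * A * star U) = A := by
      show heis (fun n : ZMod N => Fin (d n)) U (U * A * star U) = A
      simp only [heis]
      calc star U * (U * A * star U) * U = (star U * U) * A * (star U * U) := by
            simp only [mul_assoc]
        _ = A := by rw [hU.1.1, one_mul, mul_one]
    set Rg : ℕ → Set (ZMod N) :=
      fun m => {((2 * m : ℕ) : ZMod N), ((2 * m : ℕ) : ZMod N) + 1} with hRgdef
    have hcov : (⋃ m ∈ Finset.range (N / 2), Rg m) = Set.univ := pairs_cover N h2N
    have hdisj : ∀ m ∈ Finset.range (N / 2), ∀ m' ∈ Finset.range (N / 2),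
        m ≠ m' → ∀ i, i ∈ Rg m → i ∉ Rg m' := by
      intro m hm m' hm' hmm i him him'
      simp only [Finset.mem_range] at hm hm'
      simp only [hRgdef, Set.mem_insert_iff, Set.mem_singleton_iff] at him him'
      have hcast : ∀ a b : ℕ, a < N → b < N → ((a : ZMod N) = (b : ZMod N)) → a = b := by
        intro a b ha hb h
        rw [← ZMod.val_cast_of_lt ha, ← ZMod.val_cast_of_lt hb, h]
      have hp : ((2 * m : ℕ) : ZMod N) + 1 = ((2 * m + 1 : ℕ) : ZMod N) := by
        push_cast; ring
      have hp' : ((2 * m' : ℕ) : ZMod N) + 1 = ((2 * m' + 1 : ℕ) : ZMod N) := by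
        push_cast; ring
      rcases him with h | h <;> rcases him' with h' | h'
      · have := hcast _ _ (by omega) (by omega) (h.symm.trans h')
        omega
      · rw [hp'] at h'
        have := hcast _ _ (by omega) (by omega) (h.symm.trans h')
        omega
      · rw [hp] at h
        have := hcast _ _ (by omega) (by omega) (h.symm.trans h')
        omega
      · rw [hp] at h
        rw [hp'] at h'
        have := hcast _ _ (by omega) (by omega) (h.symm.trans h')
        omega
    have hA'mem := generate_of_partition Rg (Finset.range (N / 2)) hdisj
      (U * A * star U) (by
        rw [hcov]
        exact localized_univ _)
    have hmapped : A ∈ Algebra.adjoin ℂ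
        (⋃ m ∈ Finset.range (N / 2),
          ⇑f '' {B : Ops (fun n : ZMod N => Fin (d n)) |
            Localized (fun n : ZMod N => Fin (d n)) B (Rg m)}) := by
      have h1 : A ∈ Subalgebra.map f (Algebra.adjoin ℂ
          (⋃ m ∈ Finset.range (N / 2),
            {B : Ops (fun n : ZMod N => Fin (d n)) |
              Localized (fun n : ZMod N => Fin (d n)) B (Rg m)})) :=
        ⟨U * A * star U, hA'mem, hfA⟩
      rw [AlgHom.map_adjoin] at h1
      rwa [Set.image_iUnion₂] at h1
    have hstep : Algebra.adjoin ℂ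
        (⋃ m ∈ Finset.range (N / 2),
          ⇑f '' {B : Ops (fun n : ZMod N => Fin (d n)) |
            Localized (fun n : ZMod N => Fin (d n)) B (Rg m)})
        ≤ Algebra.adjoin ℂ ((W : Set (Ops (fun n : ZMod N => Fin (d n))))
            ∪ {B | Localized (fun n : ZMod N => Fin (d n)) B Rᶜ}) := by
      apply Algebra.adjoin_le
      intro x hx
      simp only [Set.mem_iUnion] at hx
      obtain ⟨m, hm, hx⟩ := hx
      by_cases hj1 : ((2 * m : ℕ) : ZMod N) = 2 * n
      · have hxSO : x ∈ SO := by
          obtain ⟨B, hB, rfl⟩ := hx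
          refine ⟨B, ?_, rfl⟩
          have hRm : Rg m = ({2 * n, 2 * n + 1} : Set (ZMod N)) := by
            rw [hRgdef]
            simp only
            rw [hj1]
          rw [Set.mem_setOf_eq] at hB ⊢
          rwa [hRm] at hB
        have hmem := subset_adjoin_supportAlgebra SO R hxSO
        rw [SetLike.mem_coe] at hmem
        have hmono : Algebra.adjoin ℂ
            ((supportAlgebra (fun n : ZMod N => Fin (d n)) SO R :
                Set (Ops (fun n : ZMod N => Fin (d n))))
              ∪ {B | Localized (fun n : ZMod N => Fin (d n)) B Rᶜ})
            ≤ Algebra.adjoin ℂ ((W : Set (Ops (fun n : ZMod N => Fin (d n))))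
              ∪ {B | Localized (fun n : ZMod N => Fin (d n)) B Rᶜ}) := by
          apply Algebra.adjoin_mono
          apply Set.union_subset_union_left
          intro t ht
          rw [SetLike.mem_coe, ← hodd] at ht
          exact Algebra.subset_adjoin (Or.inl ht)
        exact hmono hmem
      · by_cases hj2 : ((2 * m : ℕ) : ZMod N) = 2 * n + 2
        · have hxSE : x ∈ SE := by
            obtain ⟨B, hB, rfl⟩ := hx
            refine ⟨B, ?_, rfl⟩
            have he3 : ((2 * m : ℕ) : ZMod N) + 1 = 2 * n + 3 := by
              rw [hj2]; ring
            have hRm : Rg m = ({2 * n + 2, 2 * n + 3} : Set (ZMod N)) := by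
              rw [hRgdef]
              simp only
              rw [hj2]
              have e4 : (2 * n + 2 + 1 : ZMod N) = 2 * n + 3 := by ring
              rw [e4]
            rw [Set.mem_setOf_eq] at hB ⊢
            rwa [hRm] at hB
          have hmem := subset_adjoin_supportAlgebra SE R hxSE
          rw [SetLike.mem_coe] at hmem
          have hmono : Algebra.adjoin ℂ
              ((supportAlgebra (fun n : ZMod N => Fin (d n)) SE R :
                  Set (Ops (fun n : ZMod N => Fin (d n))))
                ∪ {B | Localized (fun n : ZMod N => Fin (d n)) B Rᶜ})
              ≤ Algebra.adjoin ℂ ((W : Set (Ops (fun n : ZMod N => Fin (d n))))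
                ∪ {B | Localized (fun n : ZMod N => Fin (d n)) B Rᶜ}) := by
            apply Algebra.adjoin_mono
            apply Set.union_subset_union_left
            intro t ht
            rw [SetLike.mem_coe, ← heven] at ht
            exact Algebra.subset_adjoin (Or.inr ht)
          exact hmono hmem
        · obtain ⟨B, hB, rfl⟩ := hx
          rw [Set.mem_setOf_eq] at hB
          set j : ZMod N := ((2 * m : ℕ) : ZMod N) with hjdef
          have hj : j = 2 * ((m : ℕ) : ZMod N) := by
            rw [hjdef]; push_cast; ring
          have hBloc : Localized (fun n : ZMod N => Fin (d n)) B
              ({j, j + 1} : Set (ZMod N)) := by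
            have : Rg m = ({j, j + 1} : Set (ZMod N)) := by rw [hRgdef, hjdef]
            rwa [this] at hB
          have h4 := heis_two_site hd hU hone j B hBloc
          refine Algebra.subset_adjoin (Or.inr ?_)
          show Localized (fun n : ZMod N => Fin (d n)) (f B) Rᶜ
          have hfB : f B = heis (fun n : ZMod N => Fin (d n)) U B := rfl
          rw [hfB]
          refine localized_mono ?_ h4
          intro i hi
          simp only [Set.mem_insert_iff, Set.mem_singleton_iff] at hi
          simp only [Set.mem_compl_iff, hR, Set.mem_insert_iff, Set.mem_singleton_iff]
          rintro (hc | hc)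
          · rcases hi with h | h | h | h
            · have heq : j - 1 = 2 * n + 1 := by rw [← h, hc]
              exact hj2 (by linear_combination heq)
            · have heq : j = 2 * n + 1 := by rw [← h, hc]
              exact zmod_parity_ne h2N ((m : ℕ) : ZMod N) n (by linear_combination heq - hj)
            · have heq : j + 1 = 2 * n + 1 := by rw [← h, hc]
              exact hj1 (by linear_combination heq)
            · have heq : j + 2 = 2 * n + 1 := by rw [← h, hc]
              exact zmod_parity_ne h2N n ((m : ℕ) : ZMod N) (by linear_combination hj - heq)
          · rcases hi with h | h | h | h
            · have heq : j - 1 = 2 * n + 2 := by rw [← h, hc]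
              exact zmod_parity_ne h2N ((m : ℕ) : ZMod N) (n + 1)
                (by linear_combination heq - hj)
            · have heq : j = 2 * n + 2 := by rw [← h, hc]
              exact hj2 heq
            · have heq : j + 1 = 2 * n + 2 := by rw [← h, hc]
              exact zmod_parity_ne h2N ((m : ℕ) : ZMod N) n (by linear_combination heq - hj)
            · have heq : j + 2 = 2 * n + 2 := by rw [← h, hc]
              exact hj1 (by linear_combination heq)
    have hAin : A ∈ Algebra.adjoin ℂ ((W : Set (Ops (fun n : ZMod N => Fin (d n))))
        ∪ {B | Localized (fun n : ZMod N => Fin (d n)) B Rᶜ}) := hstep hmapped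
    exact localized_mem_of_mem_adjoin hWloc hA hAin


end QCA
end

section
/- For N ≥ 2 qubits indexed by {0, 1, …, N−1}, let U = |0⟩⟨0|_0 ⊗ 1 + |1⟩⟨1|_0 ⊗ ∏_{n≠0} X_n be the generalized CNOT on (ℂ²)^{⊗N} controlled on site 0 and targeting all other sites. Then U is a self-inverse unitary and U* X_0 U = ∏_{n=0}^{N−1} X_n, the product of Pauli X over every site. In particular, for site indices taken modulo N with N ≥ 5, U maps the operator X_0 localized on site 0 to an operator acting nontrivially on every site, so U is not nearest-neighbour locality preserving (not a nearest-neighbour QCA), even though it is a matrix product (tensor network) unitary of bond dimension 2. -/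
open scoped Kronecker

namespace QCA

variable {ι : Type} [Fintype ι] [DecidableEq ι]
variable (F : ι → Type) [∀ i, Fintype (F i)] [∀ i, DecidableEq (F i)]

/-- The Pauli matrix `X`. -/
noncomputable def pauliX : Matrix (Fin 2) (Fin 2) ℂ := !![0, 1; 1, 0]

/-- The rank-one projection `|b⟩⟨b|` on a qubit. -/
noncomputable def qproj (b : Fin 2) : Matrix (Fin 2) (Fin 2) ℂ :=
  fun i j => if i = b ∧ j = b then 1 else 0

/-- The product `∏_{n ≠ 0} Xₙ` of Pauli `X` over all sites other than `0`. -/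
noncomputable def bigX (N : ℕ) [NeZero N] : Ops (fun _ : ZMod N => Fin 2) :=
  fun x y => if x 0 = y 0 ∧ ∀ n : ZMod N, n ≠ 0 → x n = 1 - y n then 1 else 0

/-- The generalized CNOT `|0⟩⟨0|₀ ⊗ 1 + |1⟩⟨1|₀ ⊗ ∏_{n≠0} Xₙ`, controlled on qubit `0` and
targeting all other qubits. -/
noncomputable def cnotAll (N : ℕ) [NeZero N] : Ops (fun _ : ZMod N => Fin 2) :=
  embedAt (fun _ : ZMod N => Fin 2) 0 (qproj 0) +
    embedAt (fun _ : ZMod N => Fin 2) 0 (qproj 1) * bigX N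

/-- The product `∏_{n} Xₙ` of Pauli `X` over every site. -/
noncomputable def allX (N : ℕ) [NeZero N] : Ops (fun _ : ZMod N => Fin 2) :=
  fun x y => if ∀ n : ZMod N, x n = 1 - y n then 1 else 0

section Aux

lemma fin2_cases (a : Fin 2) : a = 0 ∨ a = 1 := by revert a; decide

lemma fin2_sub_sub : ∀ a : Fin 2, 1 - (1 - a) = a := by decide

lemma fin2_flip : ∀ a b : Fin 2, a = 1 - b ↔ b = 1 - a := by decide

lemma fin2_flip' : ∀ a b : Fin 2, 1 - a = b ↔ a = 1 - b := by decide

lemma prod_indicator {γ : Type} [Fintype γ] (p : γ → Prop) [DecidablePred p] :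
    (∏ n : γ, (if p n then (1:ℂ) else 0)) = if ∀ n, p n then 1 else 0 := by
  by_cases h : ∀ n, p n
  · simp [h]
  · push_neg at h
    obtain ⟨n, hn⟩ := h
    rw [if_neg (by push_neg; exact ⟨n, hn⟩)]
    exact Finset.prod_eq_zero (Finset.mem_univ n) (by simp [hn])

set_option linter.unusedSectionVars false

variable (N : ℕ) [NeZero N]

/-- The involution implemented by the generalized CNOT. -/
def Tmap (x : Conf (fun _ : ZMod N => Fin 2)) : Conf (fun _ : ZMod N => Fin 2) :=
  fun n => if n = 0 then x 0 else if x 0 = 1 then 1 - x n else x n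

lemma Tmap_zero (x) : Tmap N x 0 = x 0 := by simp [Tmap]

lemma Tmap_invol (x) : Tmap N (Tmap N x) = x := by
  funext n
  by_cases hn : n = 0
  · subst hn; simp [Tmap]
  · simp only [Tmap, if_neg hn, if_pos rfl]
    rcases fin2_cases (x 0) with h0 | h0 <;>
      simp [h0, fin2_sub_sub, show (0:Fin 2) ≠ 1 by decide]

lemma cnotAll_apply (x y : Conf (fun _ : ZMod N => Fin 2)) :
    cnotAll N x y = if y = Tmap N x then 1 else 0 := by
  have hA : (embedAt (fun _ : ZMod N => Fin 2) 0 (qproj 1) * bigX N) x y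
      = if x 0 = 1 ∧ x 0 = y 0 ∧ ∀ n : ZMod N, n ≠ 0 → x n = 1 - y n then 1 else 0 := by
    rw [Matrix.mul_apply, Finset.sum_eq_single x]
    · simp only [embedAt, qproj, bigX]
      by_cases h1 : x 0 = 1 <;> simp [h1]
    · intro z _ hz
      simp only [embedAt, qproj]
      by_cases hc1 : ∀ j : ZMod N, j ≠ 0 → x j = z j
      · by_cases hc2 : x 0 = 1 ∧ z 0 = 1
        · refine absurd (funext fun j => ?_) hz
          by_cases hj : j = 0
          · subst hj; rw [hc2.2, hc2.1]
          · exact (hc1 j hj).symm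
        · simp only [if_pos hc1]
          rw [if_neg (by
            intro h; exact hc2 ⟨h.1, h.2⟩), mul_zero, zero_mul]
      · simp [hc1]
    · simp
  have hB : embedAt (fun _ : ZMod N => Fin 2) 0 (qproj 0) x y
      = if x 0 = 0 ∧ y 0 = 0 ∧ ∀ j : ZMod N, j ≠ 0 → x j = y j then 1 else 0 := by
    simp only [embedAt, qproj]
    by_cases h1 : ∀ j : ZMod N, j ≠ 0 → x j = y j <;>
      by_cases h2 : x 0 = 0 <;> by_cases h3 : y 0 = 0 <;>
        simp [h1, h2, h3, and_comm, and_assoc]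
  simp only [cnotAll, Matrix.add_apply]
  rw [hA, hB]
  rcases fin2_cases (x 0) with h0 | h0
  · have hCa : ¬(x 0 = 1 ∧ x 0 = y 0 ∧ ∀ n : ZMod N, n ≠ 0 → x n = 1 - y n) :=
      fun h => by simp [h0] at h
    rw [if_neg hCa, add_zero]
    have : (y = Tmap N x) ↔ (x 0 = 0 ∧ y 0 = 0 ∧ ∀ j : ZMod N, j ≠ 0 → x j = y j) := by
      constructor
      · intro h
        subst h
        refine ⟨h0, by rw [Tmap_zero, h0], fun j hj => ?_⟩
        simp [Tmap, hj, h0, show (0:Fin 2) ≠ 1 by decide]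
      · rintro ⟨_, _, hall⟩
        funext n
        by_cases hn : n = 0
        · subst hn; rw [Tmap_zero, ‹y 0 = 0›, h0]
        · simp [Tmap, hn, h0, show (0:Fin 2) ≠ 1 by decide, (hall n hn).symm]
    exact ((if_congr this rfl rfl).symm : _)
  · have hCb : ¬(x 0 = 0 ∧ y 0 = 0 ∧ ∀ j : ZMod N, j ≠ 0 → x j = y j) :=
      fun h => by simp [h0] at h
    rw [if_neg hCb, zero_add]
    have : (y = Tmap N x) ↔ (x 0 = 1 ∧ x 0 = y 0 ∧ ∀ n : ZMod N, n ≠ 0 → x n = 1 - y n) := by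
      constructor
      · intro h
        subst h
        refine ⟨h0, (Tmap_zero N x).symm, fun n hn => ?_⟩
        simp [Tmap, hn, h0, fin2_sub_sub]
      · rintro ⟨_, hy0, hall⟩
        funext n
        by_cases hn : n = 0
        · subst hn; rw [Tmap_zero]; exact hy0.symm
        · simp only [Tmap, if_neg hn, if_pos h0]
          exact (fin2_flip _ _).mp (hall n hn)
    exact ((if_congr this rfl rfl).symm : _)

lemma cnotAll_apply' (x y : Conf (fun _ : ZMod N => Fin 2)) :
    cnotAll N x y = if x = Tmap N y then 1 else 0 := by
  rw [cnotAll_apply]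
  refine if_congr ⟨fun h => ?_, fun h => ?_⟩ rfl rfl
  · rw [h, Tmap_invol]
  · rw [h, Tmap_invol]

lemma star_cnotAll : star (cnotAll N) = cnotAll N := by
  ext x y
  rw [Matrix.star_apply, cnotAll_apply N y x, cnotAll_apply' N x y]
  split_ifs <;> simp

lemma cnotAll_mul_self : cnotAll N * cnotAll N = 1 := by
  ext x y
  rw [Matrix.mul_apply, Matrix.one_apply, Finset.sum_eq_single (Tmap N x)]
  · rw [cnotAll_apply, if_pos rfl, one_mul, cnotAll_apply, Tmap_invol]
    exact if_congr eq_comm rfl rfl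
  · intro z _ hz
    rw [cnotAll_apply, if_neg hz, zero_mul]
  · intro h; exact absurd (Finset.mem_univ _) h

lemma pauliX_apply (a b : Fin 2) : pauliX a b = if a = 1 - b then 1 else 0 := by
  fin_cases a <;> fin_cases b <;> simp [pauliX]

lemma embed_pauliX_Tmap (x y : Conf (fun _ : ZMod N => Fin 2)) :
    embedAt (fun _ : ZMod N => Fin 2) 0 pauliX (Tmap N x) (Tmap N y) = allX N x y := by
  simp only [embedAt, allX]
  rw [Tmap_zero, Tmap_zero, pauliX_apply]
  by_cases h2 : x 0 = 1 - y 0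
  · rw [if_pos h2, mul_one]
    have key : (∀ j : ZMod N, j ≠ 0 → Tmap N x j = Tmap N y j) ↔
        (∀ n : ZMod N, x n = 1 - y n) := by
      have hy0 : y 0 = 1 - x 0 := (fin2_flip _ _).mp h2
      rcases fin2_cases (x 0) with h0 | h0
      · rw [h0] at hy0
        have hy1 : y 0 = 1 := by rw [hy0]; exact (by decide : (1:Fin 2) - 0 = 1)
        constructor
        · intro hall n
          by_cases hn : n = 0
          · subst hn; exact h2
          · have := hall n hn
            simpa [Tmap, hn, h0, hy1, show (0:Fin 2) ≠ 1 by decide] using this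
        · intro hall j hj
          have := hall j
          simpa [Tmap, hj, h0, hy1, show (0:Fin 2) ≠ 1 by decide] using this
      · rw [h0] at hy0
        have hy1 : y 0 = 0 := by rw [hy0]; exact (by decide : (1:Fin 2) - 1 = 0)
        have hy1' : ¬ (y 0 = 1) := by rw [hy1]; exact (by decide : ¬((0:Fin 2) = 1))
        constructor
        · intro hall n
          by_cases hn : n = 0
          · subst hn; exact h2
          · have := hall n hn
            simp only [Tmap, if_neg hn, if_pos h0, if_neg hy1'] at this
            exact (fin2_flip' _ _).mp this
        · intro hall j hj
          have := hall j
          simp only [Tmap, if_neg hj, if_pos h0, if_neg hy1']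
          exact (fin2_flip' _ _).mpr (hall j)
    exact if_congr key rfl rfl
  · rw [if_neg h2, mul_zero, if_neg (fun h => h2 (h 0))]

lemma heis_X0 : star (cnotAll N) * embedAt (fun _ : ZMod N => Fin 2) 0 pauliX * cnotAll N
    = allX N := by
  rw [star_cnotAll, mul_assoc]
  ext x y
  rw [Matrix.mul_apply, Finset.sum_eq_single (Tmap N x)]
  · rw [cnotAll_apply, if_pos rfl, one_mul, Matrix.mul_apply,
      Finset.sum_eq_single (Tmap N y)]
    · rw [cnotAll_apply' N (Tmap N y) y, if_pos rfl, mul_one]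
      exact embed_pauliX_Tmap N x y
    · intro z _ hz
      rw [cnotAll_apply' N z y, if_neg hz, mul_zero]
    · intro h; exact absurd (Finset.mem_univ _) h
  · intro z _ hz
    rw [cnotAll_apply, if_neg hz, zero_mul]
  · intro h; exact absurd (Finset.mem_univ _) h

lemma allX_ne : allX N (fun _ => 0) (fun _ => 1) ≠ 0 := by
  simp only [allX]
  rw [if_pos (fun n => show (0:Fin 2) = 1 - 1 by decide)]
  exact one_ne_zero

lemma localized_X0 :
    Localized (fun _ : ZMod N => Fin 2) (embedAt (fun _ : ZMod N => Fin 2) 0 pauliX)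
      ({(0:ZMod N)} : Set (ZMod N)) := by
  constructor
  · intro x y h i hi
    simp only [Set.mem_singleton_iff] at hi
    by_contra hxy
    exact h (by simp only [embedAt]; rw [if_neg (fun hall => hxy (hall i hi)), zero_mul])
  · intro x y x' y' h1 h2 h3 h4
    simp only [embedAt]
    rw [if_pos (fun j hj => h3 j (by simpa using hj)),
      if_pos (fun j hj => h4 j (by simpa using hj)), h1 0 rfl, h2 0 rfl]

lemma two_notin (hN5 : 5 ≤ N) :
    (2 : ZMod N) ∉ ({(0:ZMod N) - 1, 0, 0 + 1} : Set (ZMod N)) := by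
  have h2 : (2 : ZMod N).val = 2 := by
    rw [← Nat.cast_ofNat (n := 2)]; exact ZMod.val_cast_of_lt (lt_of_lt_of_le (by norm_num) hN5)
  have h3 : (3 : ZMod N).val = 3 := by
    rw [← Nat.cast_ofNat (n := 3)]; exact ZMod.val_cast_of_lt (lt_of_lt_of_le (by norm_num) hN5)
  have h1 : (1 : ZMod N).val = 1 := by
    rw [← Nat.cast_one]; exact ZMod.val_cast_of_lt (lt_of_lt_of_le (by norm_num) hN5)
  simp only [Set.mem_insert_iff, Set.mem_singleton_iff, zero_sub, zero_add]
  push_neg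
  refine ⟨?_, ?_, ?_⟩
  · intro h
    have h30 : (3 : ZMod N) = 0 := by
      rw [show (3:ZMod N) = 2 + 1 by norm_num, h]; ring
    rw [h30, ZMod.val_zero] at h3
    omega
  · intro h
    rw [h, ZMod.val_zero] at h2
    omega
  · intro h
    rw [h, h1] at h2
    omega

lemma mpo (x y : Conf (fun _ : ZMod N => Fin 2)) :
    cnotAll N x y = ∑ α : ZMod N → Fin 2, ∏ n : ZMod N,
      (if (n = 0 ∧ α (n+1) = x n ∧ α n = x n ∧ y n = x n) ∨
          (n ≠ 0 ∧ α (n+1) = α n ∧ y n = (if α n = 1 then 1 - x n else x n))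
        then (1:ℂ) else 0) := by
  rw [cnotAll_apply, Finset.sum_eq_single (fun _ : ZMod N => x 0)]
  · rw [prod_indicator]
    refine if_congr ⟨fun hy n => ?_, fun hall => ?_⟩ rfl rfl
    · subst hy
      by_cases hn : n = 0
      · subst hn
        exact Or.inl ⟨rfl, rfl, rfl, Tmap_zero N x⟩
      · refine Or.inr ⟨hn, rfl, ?_⟩
        simp [Tmap, hn]
    · funext n
      by_cases hn : n = 0
      · subst hn
        rcases hall 0 with ⟨_, _, _, hb⟩ | ⟨hc, _⟩
        · rw [hb, Tmap_zero]
        · exact absurd rfl hc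
      · rcases hall n with ⟨hc, _⟩ | ⟨_, _, hb⟩
        · exact absurd hc hn
        · rw [hb]; simp [Tmap, hn]
  · intro α _ hα
    rw [prod_indicator, if_neg]
    intro hall
    apply hα
    have h0 : α (0 + 1) = x 0 ∧ α 0 = x 0 := by
      rcases hall 0 with ⟨_, hq, hp, _⟩ | ⟨hc, _⟩
      · exact ⟨hq, hp⟩
      · exact absurd rfl hc
    have claim : ∀ k : ℕ, α ((k : ℕ) : ZMod N) = x 0 := by
      intro k
      induction k with
      | zero => simpa using h0.2
      | succ k ih =>
        push_cast
        by_cases hk0 : ((k : ℕ) : ZMod N) = 0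
        · rw [hk0]; exact h0.1
        · rcases hall ((k : ℕ) : ZMod N) with ⟨hc, _⟩ | ⟨_, hq2, _⟩
          · exact absurd hc hk0
          · rw [hq2]; exact ih
    funext n
    have hval : ((n.val : ℕ) : ZMod N) = n := ZMod.natCast_rightInverse n
    have := claim n.val
    rwa [hval] at this
  · intro h; exact absurd (Finset.mem_univ _) h


end Aux

/-- The generalized CNOT `U` on `N ≥ 2` qubits is a self-inverse unitary
with `U* X₀ U = ∏ₙ Xₙ`.  In particular (indices mod `N`, `N ≥ 5`) it maps the operator `X₀`
localized on site `0` to an operator acting nontrivially on every site, hence is not a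
nearest-neighbour QCA — even though it is a matrix-product (tensor-network) unitary of bond
dimension `2`. -/
theorem generalized_cnot_not_a_qca (N : ℕ) [NeZero N] (hN : 2 ≤ N) :
    cnotAll N * cnotAll N = 1 ∧
    cnotAll N ∈ Matrix.unitaryGroup (Conf (fun _ : ZMod N => Fin 2)) ℂ ∧
    star (cnotAll N) * embedAt (fun _ : ZMod N => Fin 2) 0 pauliX * cnotAll N = allX N ∧
    (5 ≤ N → ∀ n : ZMod N,
      ¬ Localized (fun _ : ZMod N => Fin 2)
        (star (cnotAll N) * embedAt (fun _ : ZMod N => Fin 2) 0 pauliX * cnotAll N)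
        (({n}ᶜ : Set (ZMod N)))) ∧
    (5 ≤ N → ¬ ∀ (n : ZMod N) (A : Ops (fun _ : ZMod N => Fin 2)),
      Localized (fun _ : ZMod N => Fin 2) A ({n} : Set (ZMod N)) →
      Localized (fun _ : ZMod N => Fin 2) (star (cnotAll N) * A * cnotAll N)
        ({n - 1, n, n + 1} : Set (ZMod N))) ∧
    ∃ w : ZMod N → Fin 2 → Fin 2 → Fin 2 → Fin 2 → ℂ,
      ∀ x y : Conf (fun _ : ZMod N => Fin 2),
        cnotAll N x y = ∑ α : ZMod N → Fin 2, ∏ n : ZMod N, w n (x n) (y n) (α n) (α (n + 1)) := by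
  refine ⟨cnotAll_mul_self N,
    ⟨by rw [star_cnotAll]; exact cnotAll_mul_self N,
     by rw [star_cnotAll]; exact cnotAll_mul_self N⟩,
    heis_X0 N, ?_, ?_, ?_⟩
  · intro _ n hloc
    rw [heis_X0] at hloc
    have := hloc.1 (fun _ => 0) (fun _ => 1) (allX_ne N) n (by simp)
    exact absurd this (show ¬((0:Fin 2) = 1) by decide)
  · intro hN5 h
    have h5 := h 0 _ (localized_X0 N)
    rw [heis_X0] at h5
    have := h5.1 (fun _ => 0) (fun _ => 1) (allX_ne N) 2 (two_notin N hN5)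
    exact absurd this (show ¬((0:Fin 2) = 1) by decide)
  · refine ⟨fun n a b p q =>
      if (n = 0 ∧ q = a ∧ p = a ∧ b = a) ∨
          (n ≠ 0 ∧ q = p ∧ b = (if p = 1 then 1 - a else a)) then (1:ℂ) else 0,
      fun x y => ?_⟩
    exact mpo N x y

end QCA
end
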